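/- Let Ω ⊆ ℝ², let f̃ > 0, (x₀, y₀) ∈ ℝ², and let z̃ : ℝ² → ℝ be strictly positive and differentiable on Ω; set z = log ∘ z̃. At each (x, y) ∈ Ω write x̃ = x − x₀, ỹ = y − y₀, d(x,y) = √( f̃²‖∇z(x,y)‖² + (1 + x̃·∂ₓz(x,y) + ỹ·∂_y z(x,y))² ), and n(x,y) = (1/d(x,y))·( f̃·∂ₓz(x,y), f̃·∂_y z(x,y), −(1 + x̃·∂ₓz(x,y) + ỹ·∂_y z(x,y)) ). Then for every channel c, every albedo ρᶜ : Ω → ℝ and lighting lᶜ ∈ ℝ⁹, the image Iᶜ(x,y) = ρᶜ(x,y)·lᶜ·(n₁, n₂, n₃, 1, n₁n₂, n₁n₃, n₂n₃, n₁² − n₂², 3n₃² − 1)ᵀ(x,y) satisfies at every (x, y) ∈ Ω the PDE 𝐚ᶜ(x,y)·∇z(x,y) + bᶜ(x,y) = Iᶜ(x,y), where 𝐚ᶜ = (ρᶜ/d)·( f̃·l₁ᶜ − x̃·l₃ᶜ, f̃·l₂ᶜ − ỹ·l₃ᶜ ) and bᶜ = ρᶜ·( −l₃ᶜ/d + l₄ᶜ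 + l₅ᶜ·f̃²·∂ₓz·∂_y z/d² + l₆ᶜ·f̃·∂ₓz·(−1 − x̃∂ₓz − ỹ∂_y z)/d² + l₇ᶜ·f̃·∂_y z·(−1 − x̃∂ₓz − ỹ∂_y z)/d² + l₈ᶜ·f̃²((∂ₓz)² − (∂_y z)²)/d² + l₉ᶜ·(3(1 + x̃∂ₓz + ỹ∂_y z)²/d² − 1) ). -/

import Mathlib

/-- Partial derivative of `z` in the `x`-direction. -/
noncomputable def zx (z : ℝ × ℝ → ℝ) (p : ℝ × ℝ) : ℝ := fderiv ℝ z p (1, 0)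

/-- Partial derivative of `z` in the `y`-direction. -/
noncomputable def zy (z : ℝ × ℝ → ℝ) (p : ℝ × ℝ) : ℝ := fderiv ℝ z p (0, 1)

/-- Perspective normalization factor
`d = √(f̃²‖∇z‖² + (1 + (x − x₀)·∂ₓz + (y − y₀)·∂_y z)²)`. -/
noncomputable def dP (ft x₀ y₀ : ℝ) (z : ℝ × ℝ → ℝ) (p : ℝ × ℝ) : ℝ :=
  Real.sqrt (ft ^ 2 * ((zx z p) ^ 2 + (zy z p) ^ 2)
    + (1 + (p.1 - x₀) * zx z p + (p.2 - y₀) * zy z p) ^ 2)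

/-- First component of the perspective unit normal. -/
noncomputable def n1P (ft x₀ y₀ : ℝ) (z : ℝ × ℝ → ℝ) (p : ℝ × ℝ) : ℝ :=
  ft * zx z p / dP ft x₀ y₀ z p

/-- Second component of the perspective unit normal. -/
noncomputable def n2P (ft x₀ y₀ : ℝ) (z : ℝ × ℝ → ℝ) (p : ℝ × ℝ) : ℝ :=
  ft * zy z p / dP ft x₀ y₀ z p

/-- Third component of the perspective unit normal. -/
noncomputable def n3P (ft x₀ y₀ : ℝ) (z : ℝ × ℝ → ℝ) (p : ℝ × ℝ) : ℝ :=
  -(1 + (p.1 - x₀) * zx z p + (p.2 - y₀) * zy z p) / dP ft x₀ y₀ z p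

/-- Under perspective projection with focal length `f̃ > 0` (here `ft`)
and principal point `(x₀, y₀)`, for a strictly positive depth map `z̃` (here `zt`)
differentiable on `Ω`, log-depth `z = log ∘ z̃`, any channel `c`, albedo `ρᶜ` and
lighting `lᶜ ∈ ℝ⁹` (indexed by `Fin 9`, so `l c 0 = l₁ᶜ`, …, `l c 8 = l₉ᶜ`), the image
`Iᶜ = ρᶜ·lᶜ·(n₁, n₂, n₃, 1, n₁n₂, n₁n₃, n₂n₃, n₁² − n₂², 3n₃² − 1)ᵀ` satisfies the PDE
`𝐚ᶜ·∇z + bᶜ = Iᶜ` on `Ω`, with `𝐚ᶜ = (ρᶜ/d)·(f̃·l₁ᶜ − x̃·l₃ᶜ, f̃·l₂ᶜ − ỹ·l₃ᶜ)`,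
`x̃ = x − x₀`, `ỹ = y − y₀`, and `bᶜ` as stated. -/
theorem sfs_pde_perspective (Ω : Set (ℝ × ℝ)) (ft x₀ y₀ : ℝ) (hft : 0 < ft)
    (zt : ℝ × ℝ → ℝ) (hpos : ∀ p ∈ Ω, 0 < zt p)
    (hzt : ∀ p ∈ Ω, DifferentiableAt ℝ zt p)
    (z : ℝ × ℝ → ℝ) (hz : z = Real.log ∘ zt)
    (C : ℕ) (ρ : Fin C → ℝ × ℝ → ℝ) (l : Fin C → Fin 9 → ℝ) (I : Fin C → ℝ × ℝ → ℝ)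
    (hI : ∀ c : Fin C, ∀ p ∈ Ω,
      I c p = ρ c p * (l c 0 * n1P ft x₀ y₀ z p + l c 1 * n2P ft x₀ y₀ z p
        + l c 2 * n3P ft x₀ y₀ z p + l c 3
        + l c 4 * (n1P ft x₀ y₀ z p * n2P ft x₀ y₀ z p)
        + l c 5 * (n1P ft x₀ y₀ z p * n3P ft x₀ y₀ z p)
        + l c 6 * (n2P ft x₀ y₀ z p * n3P ft x₀ y₀ z p)
        + l c 7 * ((n1P ft x₀ y₀ z p) ^ 2 - (n2P ft x₀ y₀ z p) ^ 2)
        + l c 8 * (3 * (n3P ft x₀ y₀ z p) ^ 2 - 1))) :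
    ∀ c : Fin C, ∀ p ∈ Ω,
      (ρ c p / dP ft x₀ y₀ z p * (ft * l c 0 - (p.1 - x₀) * l c 2)) * zx z p
      + (ρ c p / dP ft x₀ y₀ z p * (ft * l c 1 - (p.2 - y₀) * l c 2)) * zy z p
      + ρ c p * (-(l c 2) / dP ft x₀ y₀ z p + l c 3
        + l c 4 * (ft ^ 2 * zx z p * zy z p) / (dP ft x₀ y₀ z p) ^ 2
        + l c 5 * (ft * zx z p * (-1 - (p.1 - x₀) * zx z p - (p.2 - y₀) * zy z p))
            / (dP ft x₀ y₀ z p) ^ 2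
        + l c 6 * (ft * zy z p * (-1 - (p.1 - x₀) * zx z p - (p.2 - y₀) * zy z p))
            / (dP ft x₀ y₀ z p) ^ 2
        + l c 7 * (ft ^ 2 * ((zx z p) ^ 2 - (zy z p) ^ 2)) / (dP ft x₀ y₀ z p) ^ 2
        + l c 8 * (3 * (1 + (p.1 - x₀) * zx z p + (p.2 - y₀) * zy z p) ^ 2
            / (dP ft x₀ y₀ z p) ^ 2 - 1))
      = I c p := by
  intro c p hp
  set u := zx z p with hu
  set v := zy z p with hv
  set w := 1 + (p.1 - x₀) * u + (p.2 - y₀) * v with hw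
  have hE : 0 < ft ^ 2 * (u ^ 2 + v ^ 2) + w ^ 2 := by
    rcases eq_or_ne u 0 with h1 | h1
    · rcases eq_or_ne v 0 with h2 | h2
      · simp [hw, h1, h2]
      · have : 0 < ft ^ 2 * (u ^ 2 + v ^ 2) := by positivity
        nlinarith [sq_nonneg w]
    · have : 0 < ft ^ 2 * (u ^ 2 + v ^ 2) := by positivity
      nlinarith [sq_nonneg w]
  have hd : 0 < dP ft x₀ y₀ z p := Real.sqrt_pos.mpr hE
  have hd2 : (dP ft x₀ y₀ z p) ^ 2 = ft ^ 2 * (u ^ 2 + v ^ 2) + w ^ 2 :=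
    Real.sq_sqrt hE.le
  have hdne : dP ft x₀ y₀ z p ≠ 0 := ne_of_gt hd
  rw [hI c p hp]
  simp only [n1P, n2P, n3P, ← hu, ← hv, ← hw]
  field_simp
  ring_nf
  rw [hw]
  ring
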